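/- Let F be an algebraically closed field (or any field where κ and the projective-translation property hold). For any points x, y ∈ F², the set T_{xy} = {g ∈ SE₂(F) : g(x) = y} maps under the kinematic mapping κ to a subset of a projective line in PF³. -/
import Mathlib


/-- A positively oriented rigid motion `x ↦ Rx + (s,t)` of the plane, with
rotation `R = [[u,-v],[v,u]]`, `u² + v² = 1`. -/
structure SE2 (F : Type*) [Field F] where
  u : F
  v : F
  s : F
  t : F
  huv : u ^ 2 + v ^ 2 = 1

/-- The action of a rigid motion on a point of the plane. -/
def SE2.act {F : Type*} [Field F] (g : SE2 F) (x : F × F) : F × F :=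
  (g.u * x.1 - g.v * x.2 + g.s, g.v * x.1 + g.u * x.2 + g.t)

open Classical in
/-- Homogeneous coordinates of the Blaschke–Grünwald kinematic mapping. -/
noncomputable def kvec {F : Type*} [Field F] (g : SE2 F) : Fin 4 → F :=
  if g.u = -1 then ![0, 2, g.t, g.s]
  else ![2 * (g.u + 1), 2 * g.v, g.s * (g.u + 1) + g.t * g.v,
         g.s * g.v - g.t * (g.u + 1)]

theorem transporters_map_to_lines (F : Type*) [Field F] [IsAlgClosed F]
    (hchar : (2 : F) ≠ 0) (x y : F × F) :
    ∃ P Q : Fin 4 → F, LinearIndependent F ![P, Q] ∧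
      ∀ g : SE2 F, g.act x = y →
        ∃ a b : F, ¬(a = 0 ∧ b = 0) ∧ kvec g = a • P + b • Q := by
  refine ⟨![2, 0, y.1 - x.1, x.2 - y.2], ![0, 2, y.2 + x.2, y.1 + x.1], ?_, ?_⟩
  · rw [LinearIndependent.pair_iff]
    intro a b h
    have h0 := congrFun h 0
    have h1 := congrFun h 1
    simp only [Pi.add_apply, Pi.smul_apply, Matrix.cons_val_zero, Matrix.cons_val_one,
      Matrix.head_cons, smul_eq_mul, Pi.zero_apply, mul_zero, add_zero, zero_add] at h0 h1
    constructor
    · rcases mul_eq_zero.mp h0 with h | h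
      · exact h
      · exact absurd h hchar
    · rcases mul_eq_zero.mp h1 with h | h
      · exact h
      · exact absurd h hchar
  · rintro ⟨u, v, s, t, huv⟩ hg
    have h1 : u * x.1 - v * x.2 + s = y.1 := congrArg Prod.fst hg
    have h2 : v * x.1 + u * x.2 + t = y.2 := congrArg Prod.snd hg
    by_cases hu : u = -1
    · have hv : v = 0 := by
        have hv2 : v ^ 2 = 0 := by rw [hu] at huv; linear_combination huv
        exact pow_eq_zero_iff (n := 2) (by norm_num) |>.mp hv2
      refine ⟨0, 1, by simp, ?_⟩
      funext i
      fin_cases i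
      · simp [kvec, hu]
      · simp [kvec, hu]
      · simp [kvec, hu]; linear_combination h2 - x.1 * hv - x.2 * hu
      · simp [kvec, hu]; linear_combination h1 + x.2 * hv - x.1 * hu
    · refine ⟨u + 1, v, fun h => hu (by linear_combination h.1), ?_⟩
      funext i
      fin_cases i
      · simp [kvec, hu]; ring
      · simp [kvec, hu]; ring
      · simp [kvec, hu]; linear_combination (u + 1) * h1 + v * h2 - x.1 * huv
      · simp [kvec, hu]; linear_combination v * h1 - (u + 1) * h2 + x.2 * huv
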